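/- (Improvement step of the ODOEM algorithm.) Let ξ be a design and z ∈ X a point such that d(z,ξ) > p − Tr( M(ξ)⁻¹ C ), where d(z,ξ) = g(z)ᵀ M(ξ)⁻¹ g(z). Then there exists α ∈ (0,1) such that det( (1−α)·M(ξ) + α·( g(z)g(z)ᵀ + C ) ) > det M(ξ); that is, mixing ξ with the single-point design at z strictly increases the determinant of the information matrix. -/

import Mathlib

open MeasureTheory Matrix

/-- The information matrix `M(ξ) = ∫_X g(z) g(z)ᵀ dξ(z) + C` of a design `ξ`
(a Borel probability measure on `X ⊆ ℝ^d`), defined entrywise. -/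
noncomputable def infoMatrix {d p : ℕ} {X : Set (Fin d → ℝ)}
    (g : (Fin d → ℝ) → Fin p → ℝ) (C : Matrix (Fin p) (Fin p) ℝ)
    (ξ : Measure X) : Matrix (Fin p) (Fin p) ℝ :=
  Matrix.of fun i j => (∫ z, g (z : Fin d → ℝ) i * g (z : Fin d → ℝ) j ∂ξ) + C i j

/-- The prediction variance `d(z,ξ) = g(z)ᵀ M(ξ)⁻¹ g(z)`. -/
noncomputable def predVar {d p : ℕ} {X : Set (Fin d → ℝ)}
    (g : (Fin d → ℝ) → Fin p → ℝ) (C : Matrix (Fin p) (Fin p) ℝ)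
    (ξ : Measure X) (z : Fin d → ℝ) : ℝ :=
  g z ⬝ᵥ ((infoMatrix g C ξ)⁻¹ *ᵥ g z)

lemma trace_mul_vecMulVec' {p : ℕ} (A : Matrix (Fin p) (Fin p) ℝ) (u v : Fin p → ℝ) :
    Matrix.trace (A * vecMulVec u v) = v ⬝ᵥ (A *ᵥ u) := by
  simp only [Matrix.trace, Matrix.diag, Matrix.mul_apply, vecMulVec_apply, dotProduct,
    mulVec, Finset.mul_sum]
  refine Finset.sum_congr rfl fun i _ => Finset.sum_congr rfl fun j _ => by ring

/-- Improvement step of the ODOEM algorithm: if `d(z,ξ) > p − Tr(M(ξ)⁻¹ C)`, then mixing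
`ξ` with the single-point design at `z` strictly increases the determinant of the
information matrix for some `α ∈ (0,1)`. -/
theorem exists_det_gt_of_predVar_gt {d p : ℕ} (hd : 1 ≤ d) (hp : 1 ≤ p)
    {X : Set (Fin d → ℝ)} (hX : IsCompact X)
    {g : (Fin d → ℝ) → Fin p → ℝ} (hg : Continuous g)
    {C : Matrix (Fin p) (Fin p) ℝ} (hC : C.PosDef)
    (ξ : Measure X) [IsProbabilityMeasure ξ]
    (z : Fin d → ℝ) (hz : z ∈ X)
    (hgt : predVar g C ξ z > (p : ℝ) - Matrix.trace ((infoMatrix g C ξ)⁻¹ * C)) :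
    ∃ α ∈ Set.Ioo (0 : ℝ) 1,
      ((1 - α) • infoMatrix g C ξ + α • (vecMulVec (g z) (g z) + C)).det
        > (infoMatrix g C ξ).det := by
  classical
  haveI : CompactSpace X := isCompact_iff_compactSpace.mp hX
  have hgt' : g z ⬝ᵥ ((infoMatrix g C ξ)⁻¹ *ᵥ g z)
      > (p : ℝ) - Matrix.trace ((infoMatrix g C ξ)⁻¹ * C) := hgt
  set M := infoMatrix g C ξ with hMdef
  set A : Matrix (Fin p) (Fin p) ℝ :=
    Matrix.of fun i j => ∫ w, g (w : Fin d → ℝ) i * g (w : Fin d → ℝ) j ∂ξ with hAdef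
  -- integrability of the entries
  have hint : ∀ i j : Fin p,
      Integrable (fun w : X => g (w : Fin d → ℝ) i * g (w : Fin d → ℝ) j) ξ := by
    intro i j
    have hc : Continuous fun w : X => g (w : Fin d → ℝ) i * g (w : Fin d → ℝ) j :=
      ((continuous_apply i).comp (hg.comp continuous_subtype_val)).mul
        ((continuous_apply j).comp (hg.comp continuous_subtype_val))
    exact hc.integrable_of_hasCompactSupport (HasCompactSupport.of_compactSpace _)
  -- the quadratic form of A is an integral of squares
  have hq : ∀ x : Fin p → ℝ,
      x ⬝ᵥ (A *ᵥ x) = ∫ w, (x ⬝ᵥ g (w : Fin d → ℝ)) ^ 2 ∂ξ := by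
    intro x
    calc x ⬝ᵥ (A *ᵥ x)
        = ∑ i, ∑ j, (x i * x j) * ∫ w, g (w : Fin d → ℝ) i * g (w : Fin d → ℝ) j ∂ξ := by
          simp only [dotProduct, mulVec, Finset.mul_sum, hAdef, Matrix.of_apply]
          exact Finset.sum_congr rfl fun i _ => Finset.sum_congr rfl fun j _ => by ring
      _ = ∑ i, ∑ j, ∫ w, (x i * x j) * (g (w : Fin d → ℝ) i * g (w : Fin d → ℝ) j) ∂ξ := by
          refine Finset.sum_congr rfl fun i _ => Finset.sum_congr rfl fun j _ => ?_
          rw [integral_const_mul]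
      _ = ∑ i, ∫ w, ∑ j, (x i * x j) * (g (w : Fin d → ℝ) i * g (w : Fin d → ℝ) j) ∂ξ := by
          refine Finset.sum_congr rfl fun i _ => ?_
          exact (integral_finset_sum _ fun j _ => (hint i j).const_mul _).symm
      _ = ∫ w, ∑ i, ∑ j, (x i * x j) * (g (w : Fin d → ℝ) i * g (w : Fin d → ℝ) j) ∂ξ := by
          exact (integral_finset_sum _ fun i _ =>
            integrable_finset_sum _ fun j _ => (hint i j).const_mul _).symm
      _ = ∫ w, (x ⬝ᵥ g (w : Fin d → ℝ)) ^ 2 ∂ξ := by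
          congr 1; funext w
          simp only [dotProduct, sq, Finset.sum_mul_sum]
          exact Finset.sum_congr rfl fun i _ => Finset.sum_congr rfl fun j _ => by ring
  -- A is positive semidefinite
  have hA : A.PosSemidef := by
    rw [Matrix.posSemidef_iff_dotProduct_mulVec]
    constructor
    · ext i j
      simp only [Matrix.conjTranspose_apply, hAdef, Matrix.of_apply, star_trivial]
      have : (fun w : X => g (w : Fin d → ℝ) j * g (w : Fin d → ℝ) i)
          = fun w : X => g (w : Fin d → ℝ) i * g (w : Fin d → ℝ) j := by
        funext w; ring
      rw [this]
    · intro x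
      simp only [star_trivial]
      rw [hq x]
      exact integral_nonneg fun w => sq_nonneg _
  have hAC : M = A + C := by
    ext i j
    simp [hMdef, infoMatrix, hAdef, Matrix.add_apply]
  have hM : M.PosDef := hAC ▸ Matrix.PosDef.posSemidef_add hA hC
  have hdet : 0 < M.det := hM.det_pos
  have hu : IsUnit M.det := hdet.ne'.isUnit
  have hMinv : M * M⁻¹ = 1 := Matrix.mul_nonsing_inv M hu
  have hinvM : M⁻¹ * M = 1 := Matrix.nonsing_inv_mul M hu
  set N : Matrix (Fin p) (Fin p) ℝ := vecMulVec (g z) (g z) + C with hNdef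
  set D : Matrix (Fin p) (Fin p) ℝ := M⁻¹ * (N - M) with hDdef
  -- the trace of D is positive
  have htr : Matrix.trace D = (g z ⬝ᵥ (M⁻¹ *ᵥ g z)) + Matrix.trace (M⁻¹ * C) - p := by
    rw [hDdef, Matrix.mul_sub, hNdef, Matrix.mul_add, hinvM]
    rw [Matrix.trace_sub, Matrix.trace_add, Matrix.trace_one, trace_mul_vecMulVec']
    simp
  have ht : 0 < Matrix.trace D := by rw [htr]; linarith
  -- key factorization
  have hkey : ∀ α : ℝ, (1 - α) • M + α • N = M * (1 + α • D) := by
    intro α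
    have h2 : M * D = N - M := by
      rw [hDdef, ← Matrix.mul_assoc, hMinv, Matrix.one_mul]
    rw [Matrix.mul_add, Matrix.mul_one, Matrix.mul_smul, h2, smul_sub, sub_smul, one_smul]
    abel
  set P : Polynomial ℝ :=
    (Matrix.det (1 + (Polynomial.X : Polynomial ℝ) • D.map Polynomial.C)).divX.divX with hPdef
  have hcont : Continuous fun α : ℝ => Matrix.trace D + P.eval α * α :=
    continuous_const.add ((Polynomial.continuous P).mul continuous_id)
  have h0 : (0 : ℝ) < Matrix.trace D + P.eval 0 * 0 := by simpa using ht
  have hev : ∀ᶠ α in nhds (0 : ℝ), 0 < Matrix.trace D + P.eval α * α :=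
    (hcont.tendsto 0).eventually (eventually_gt_nhds h0)
  rw [Metric.eventually_nhds_iff] at hev
  obtain ⟨δ, hδpos, hδ⟩ := hev
  set α₀ : ℝ := min δ 1 / 2 with hα₀def
  have hα₀pos : 0 < α₀ := by
    have := lt_min hδpos one_pos
    positivity
  have hα₀lt : α₀ < 1 := by
    have : min δ 1 ≤ 1 := min_le_right _ _
    simp only [hα₀def]; linarith
  have hα₀δ : dist α₀ 0 < δ := by
    rw [Real.dist_eq, sub_zero, abs_of_pos hα₀pos]
    have : min δ 1 ≤ δ := min_le_left _ _
    simp only [hα₀def]; linarith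
  have hqpos : 0 < Matrix.trace D + P.eval α₀ * α₀ := hδ hα₀δ
  refine ⟨α₀, ⟨hα₀pos, hα₀lt⟩, ?_⟩
  rw [hkey α₀, Matrix.det_mul, Matrix.det_one_add_smul, ← hPdef]
  nlinarith [mul_pos (mul_pos hdet hα₀pos) hqpos]
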